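/- For every integer d ≥ 0, ((q;q)_d/(μ;q)_d) · ∑_{k=1}^{d} (1/(1-q^k)) · (μ;q)_{d-k}/(q;q)_{d-k} = ∑_{k=0}^{d-1} 1/(1 - μ q^k). -/

import Mathlib

noncomputable def qPoch (z q : ℝ) (m : ℕ) : ℝ := ∏ j ∈ Finset.range m, (1 - z * q ^ j)

lemma qPoch_zero (z q : ℝ) : qPoch z q 0 = 1 := by simp [qPoch]

lemma qPoch_succ (z q : ℝ) (m : ℕ) : qPoch z q (m + 1) = qPoch z q m * (1 - z * q ^ m) :=
  Finset.prod_range_succ _ _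

lemma one_sub_pow_pos {q : ℝ} (hq0 : 0 < q) (hq1 : q < 1) (n : ℕ) (hn : n ≠ 0) :
    0 < 1 - q ^ n := by
  have := pow_lt_one₀ hq0.le hq1 hn
  linarith

lemma qPoch_q_ne {q : ℝ} (hq0 : 0 < q) (hq1 : q < 1) (m : ℕ) : qPoch q q m ≠ 0 := by
  unfold qPoch
  rw [Finset.prod_ne_zero_iff]
  intro j _
  have h : q * q ^ j = q ^ (j + 1) := by ring
  have := one_sub_pow_pos hq0 hq1 (j + 1) (by omega)
  rw [h]
  linarith

lemma qPoch_mu_ne {q μ : ℝ} (d : ℕ) (hμ : ∀ k < d, 1 - μ * q ^ k ≠ 0) :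
    qPoch μ q d ≠ 0 := by
  unfold qPoch
  rw [Finset.prod_ne_zero_iff]
  intro j hj
  exact hμ j (Finset.mem_range.mp hj)

/-- Telescoping lemma: A(d) = 1 + (q-μ) ∑ A(m) q^m / (1 - q^(m+1)). -/
lemma lemA (q μ : ℝ) (hq0 : 0 < q) (hq1 : q < 1) (d : ℕ) :
    qPoch μ q d / qPoch q q d
      = 1 + (q - μ) * ∑ m ∈ Finset.range d,
          (qPoch μ q m / qPoch q q m) * q ^ m / (1 - q ^ (m + 1)) := by
  induction d with
  | zero => simp [qPoch]
  | succ d ih =>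
    rw [Finset.sum_range_succ, mul_add, ← add_assoc, ← ih, qPoch_succ, qPoch_succ]
    have h1 : qPoch q q d ≠ 0 := qPoch_q_ne hq0 hq1 d
    have h2 : (1 : ℝ) - q ^ (d + 1) ≠ 0 :=
      ne_of_gt (one_sub_pow_pos hq0 hq1 (d + 1) (by omega))
    have h3 : (1 : ℝ) - q * q ^ d ≠ 0 := by
      rw [show q * q ^ d = q ^ (d + 1) by ring]; exact h2
    have h4 : (1 : ℝ) - q ^ d * q ≠ 0 := by rw [mul_comm]; exact h3
    field_simp
    ring

/-- Reindexing helper. -/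
lemma reindex (d : ℕ) (f : ℕ → ℝ) :
    ∑ k ∈ Finset.Icc 1 d, f (d - k) = ∑ m ∈ Finset.range d, f m := by
  rw [← Finset.Ico_add_one_right_eq_Icc, Finset.sum_Ico_eq_sum_range, ← Finset.sum_range_reflect f d]
  apply Finset.sum_congr (by norm_num)
  intro i hi
  congr 1
  rw [Finset.mem_range] at hi
  omega

lemma alg (q μ X Y P Q : ℝ) (h1 : 1 - X ≠ 0) (h2 : 1 - Y * q ≠ 0)
    (h3 : 1 - X * (Y * q) ≠ 0) (hQ : Q ≠ 0) :
    1 / (1 - X) * (P * (1 - μ * Y) / (Q * (1 - q * Y)))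
      = (1 - μ * (X * Y)) / (1 - X * (Y * q)) * (1 / (1 - X) * (P / Q))
        + (q - μ) * (P / Q * Y / (1 - Y * q)) / (1 - X * (Y * q)) := by
  have h2' : 1 - q * Y ≠ 0 := by rw [mul_comm]; exact h2
  have h3' : 1 - X * Y * q ≠ 0 := by rw [mul_assoc]; exact h3
  field_simp
  ring

/-- Key recursion: S(d+1) = r S(d) + A(d)/(1-q^(d+1)). -/
lemma keyB (q μ : ℝ) (hq0 : 0 < q) (hq1 : q < 1) (d : ℕ) :
    ∑ k ∈ Finset.Icc 1 (d + 1),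
        (1 / (1 - q ^ k)) * (qPoch μ q (d + 1 - k) / qPoch q q (d + 1 - k))
      = ((1 - μ * q ^ d) / (1 - q ^ (d + 1))) *
          ∑ k ∈ Finset.Icc 1 d, (1 / (1 - q ^ k)) * (qPoch μ q (d - k) / qPoch q q (d - k))
        + (qPoch μ q d / qPoch q q d) / (1 - q ^ (d + 1)) := by
  have hd1 : (1 : ℝ) - q ^ (d + 1) ≠ 0 :=
    ne_of_gt (one_sub_pow_pos hq0 hq1 (d + 1) (by omega))
  rw [Finset.sum_Icc_succ_top (by omega : 1 ≤ d + 1)]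
  have h0 : d + 1 - (d + 1) = 0 := by omega
  rw [h0, qPoch_zero, qPoch_zero]
  have key : ∀ k ∈ Finset.Icc 1 d,
      (1 / (1 - q ^ k)) * (qPoch μ q (d + 1 - k) / qPoch q q (d + 1 - k))
        = ((1 - μ * q ^ d) / (1 - q ^ (d + 1))) *
            ((1 / (1 - q ^ k)) * (qPoch μ q (d - k) / qPoch q q (d - k)))
          + (q - μ) * ((qPoch μ q (d - k) / qPoch q q (d - k)) * q ^ (d - k)
              / (1 - q ^ (d - k + 1))) / (1 - q ^ (d + 1)) := by
    intro k hk
    rw [Finset.mem_Icc] at hk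
    obtain ⟨hk1, hk2⟩ := hk
    set m := d - k with hm
    have e1 : d + 1 - k = m + 1 := by omega
    rw [e1, qPoch_succ, qPoch_succ]
    have ed : d = k + m := by omega
    rw [show q ^ (d + 1) = q ^ k * (q ^ m * q) by rw [ed]; ring,
        show q ^ d = q ^ k * q ^ m by rw [ed]; ring,
        show q ^ (m + 1) = q ^ m * q by ring]
    have hk0 : (1 : ℝ) - q ^ k ≠ 0 := ne_of_gt (one_sub_pow_pos hq0 hq1 k (by omega))
    have hm1 : (1 : ℝ) - q ^ m * q ≠ 0 := by
      rw [show q ^ m * q = q ^ (m + 1) by ring]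
      exact ne_of_gt (one_sub_pow_pos hq0 hq1 (m + 1) (by omega))
    have hdd : (1 : ℝ) - q ^ k * (q ^ m * q) ≠ 0 := by
      rw [show q ^ k * (q ^ m * q) = q ^ (k + m + 1) by ring]
      exact ne_of_gt (one_sub_pow_pos hq0 hq1 (k + m + 1) (by omega))
    have hPq : qPoch q q m ≠ 0 := qPoch_q_ne hq0 hq1 m
    exact alg q μ (q ^ k) (q ^ m) (qPoch μ q m) (qPoch q q m) hk0 hm1 hdd hPq
  rw [Finset.sum_congr rfl key, Finset.sum_add_distrib, ← Finset.mul_sum]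
  have hre : ∑ k ∈ Finset.Icc 1 d,
      (q - μ) * ((qPoch μ q (d - k) / qPoch q q (d - k)) * q ^ (d - k)
        / (1 - q ^ (d - k + 1))) / (1 - q ^ (d + 1))
      = ∑ m ∈ Finset.range d,
      (q - μ) * ((qPoch μ q m / qPoch q q m) * q ^ m / (1 - q ^ (m + 1)))
        / (1 - q ^ (d + 1)) :=
    reindex d (fun m => (q - μ) * ((qPoch μ q m / qPoch q q m) * q ^ m / (1 - q ^ (m + 1)))
        / (1 - q ^ (d + 1)))
  rw [hre]
  have hsum : ∑ m ∈ Finset.range d,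
      (q - μ) * ((qPoch μ q m / qPoch q q m) * q ^ m / (1 - q ^ (m + 1)))
        / (1 - q ^ (d + 1))
      = (qPoch μ q d / qPoch q q d - 1) / (1 - q ^ (d + 1)) := by
    rw [← Finset.sum_div]
    congr 1
    rw [← Finset.mul_sum, lemA q μ hq0 hq1 d]
    ring
  rw [hsum, add_assoc]
  have hPq : qPoch q q d ≠ 0 := qPoch_q_ne hq0 hq1 d
  congr 1
  field_simp
  ring

theorem q_digamma_identity (q μ : ℝ) (d : ℕ) (hq0 : 0 < q) (hq1 : q < 1)
    (hμ : ∀ k < d, 1 - μ * q ^ k ≠ 0) :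
    (qPoch q q d / qPoch μ q d) *
        ∑ k ∈ Finset.Icc 1 d, (1 / (1 - q ^ k)) * (qPoch μ q (d - k) / qPoch q q (d - k))
      = ∑ k ∈ Finset.range d, 1 / (1 - μ * q ^ k) := by
  induction d with
  | zero => simp
  | succ d ih =>
    have hμd : ∀ k < d, 1 - μ * q ^ k ≠ 0 := fun k hk => hμ k (by omega)
    have ihd := ih hμd
    have hPμ : qPoch μ q d ≠ 0 := qPoch_mu_ne d hμd
    have hPq : qPoch q q d ≠ 0 := qPoch_q_ne hq0 hq1 d
    have hd1 : (1 : ℝ) - q ^ (d + 1) ≠ 0 :=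
      ne_of_gt (one_sub_pow_pos hq0 hq1 (d + 1) (by omega))
    have hmud : 1 - μ * q ^ d ≠ 0 := hμ d (by omega)
    rw [keyB q μ hq0 hq1 d, Finset.sum_range_succ, qPoch_succ, qPoch_succ]
    have hS : ∑ k ∈ Finset.Icc 1 d, (1 / (1 - q ^ k)) *
          (qPoch μ q (d - k) / qPoch q q (d - k))
        = (qPoch μ q d / qPoch q q d) * ∑ k ∈ Finset.range d, 1 / (1 - μ * q ^ k) := by
      rw [← ihd]
      field_simp
    rw [hS]
    have h3 : (1 : ℝ) - q * q ^ d ≠ 0 := by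
      rw [show q * q ^ d = q ^ (d + 1) by ring]; exact hd1
    have h4 : (1 : ℝ) - q ^ d * q ≠ 0 := by rw [mul_comm]; exact h3
    have h5 : (1 : ℝ) - q ^ d * μ ≠ 0 := by rw [mul_comm]; exact hmud
    field_simp
    ring
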